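/- For G(u) = u + u^2 - 2u^3, if ρ < 1/6 and ρ < λ < ρ* = (1-2ρ)/4, then for every α ∈ (ρ, λ), (G(λ) - G(α))/(λ - α) ≥ (G(λ) - G(ρ))/(λ - ρ). -/
import Mathlib


theorem stmt_6 (G : ℝ → ℝ) (hG : ∀ u, G u = u + u^2 - 2*u^3)
    (ρ lam : ℝ) (hρ : ρ < 1/6) (h1 : ρ < lam) (h2 : lam < (1 - 2*ρ)/4) :
    ∀ α ∈ Set.Ioo ρ lam,
      (G lam - G α) / (lam - α) ≥ (G lam - G ρ) / (lam - ρ) := by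
  rintro α ⟨ha1, ha2⟩
  rw [ge_iff_le, div_le_div_iff₀ (by linarith) (by linarith)]
  rw [hG lam, hG α, hG ρ]
  nlinarith [mul_nonneg (sub_nonneg.2 ha1.le) (by linarith : (0:ℝ) ≤ 1 - 2*lam - 2*α - 2*ρ),
    sq_nonneg (lam - α), sq_nonneg (lam - ρ), mul_pos (sub_pos.2 ha2) (sub_pos.2 h1)]
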